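/- Let K be a finite field of odd order s. The group of similitudes of Q modulo its subgroup of nonzero scalar matrices has order s·(s² − 1). -/

import Mathlib

open Matrix

/-- The quadratic form `Q(x₀,x₁,x₂) = x₀x₁ - x₂²` on `K³`. -/
def quadForm (K : Type*) [CommRing K] (v : Fin 3 → K) : K := v 0 * v 1 - v 2 ^ 2

/-- The group of similitudes of `Q`, as a subgroup of `GL(3,K)`: those `A` with
`Q(A·x) = c·Q(x)` for all `x`, for some `c ∈ K*`. -/
def similitudeGroup (K : Type*) [Field K] : Subgroup (GL (Fin 3) K) where
  carrier := {A | ∃ c : K, c ≠ 0 ∧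
    ∀ x : Fin 3 → K, quadForm K ((A : Matrix (Fin 3) (Fin 3) K).mulVec x) = c * quadForm K x}
  mul_mem' := by
    rintro A B ⟨c, hc, hA⟩ ⟨d, hd, hB⟩
    refine ⟨c * d, mul_ne_zero hc hd, fun x => ?_⟩
    have h : ((A * B : GL (Fin 3) K) : Matrix (Fin 3) (Fin 3) K)
        = (A : Matrix (Fin 3) (Fin 3) K) * (B : Matrix (Fin 3) (Fin 3) K) := rfl
    rw [h, ← Matrix.mulVec_mulVec, hA, hB, mul_assoc]
  one_mem' := ⟨1, one_ne_zero, fun x => by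
    have h : ((1 : GL (Fin 3) K) : Matrix (Fin 3) (Fin 3) K) = 1 := rfl
    rw [h, Matrix.one_mulVec, one_mul]⟩
  inv_mem' := by
    rintro A ⟨c, hc, hA⟩
    refine ⟨c⁻¹, inv_ne_zero hc, fun x => ?_⟩
    have h : (A : Matrix (Fin 3) (Fin 3) K).mulVec
        (((A⁻¹ : GL (Fin 3) K) : Matrix (Fin 3) (Fin 3) K).mulVec x) = x := by
      rw [Matrix.mulVec_mulVec]
      have : (A : Matrix (Fin 3) (Fin 3) K) * ((A⁻¹ : GL (Fin 3) K) : Matrix (Fin 3) (Fin 3) K)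
          = 1 := A.mul_inv
      rw [this, Matrix.one_mulVec]
    have h2 := hA (((A⁻¹ : GL (Fin 3) K) : Matrix (Fin 3) (Fin 3) K).mulVec x)
    rw [h] at h2
    rw [h2]
    field_simp
  
/-- The subgroup of nonzero scalar matrices inside `GL(3,K)`. -/
def scalarSubgroup (K : Type*) [Field K] : Subgroup (GL (Fin 3) K) where
  carrier := {A | ∃ μ : K, μ ≠ 0 ∧ (A : Matrix (Fin 3) (Fin 3) K) = μ • (1 : Matrix (Fin 3) (Fin 3) K)}
  mul_mem' := by
    rintro A B ⟨μ, hμ, hA⟩ ⟨ν, hν, hB⟩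
    refine ⟨μ * ν, mul_ne_zero hμ hν, ?_⟩
    have h : ((A * B : GL (Fin 3) K) : Matrix (Fin 3) (Fin 3) K)
        = (A : Matrix (Fin 3) (Fin 3) K) * (B : Matrix (Fin 3) (Fin 3) K) := rfl
    rw [h, hA, hB, smul_mul_smul_comm, one_mul]
  one_mem' := ⟨1, one_ne_zero, by simp⟩
  inv_mem' := by
    rintro A ⟨μ, hμ, hA⟩
    refine ⟨μ⁻¹, inv_ne_zero hμ, ?_⟩
    have h : ((A⁻¹ : GL (Fin 3) K) : Matrix (Fin 3) (Fin 3) K)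
        = (A : Matrix (Fin 3) (Fin 3) K)⁻¹ := (Matrix.coe_units_inv A)
    rw [h, hA]
    exact Matrix.inv_eq_left_inv
      (by rw [smul_mul_smul_comm, one_mul, inv_mul_cancel₀ hμ, one_smul])
  
/-- The group of similitudes of `Q` modulo its subgroup of nonzero scalar matrices
has order `s·(s² − 1)`, where `s` is the (odd) order of `K`. -/
def phiMat {K : Type*} [CommRing K] (m : Matrix (Fin 2) (Fin 2) K) : Matrix (Fin 3) (Fin 3) K :=
  !![m 0 0 ^ 2, m 0 1 ^ 2, 2 * m 0 0 * m 0 1;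
     m 1 0 ^ 2, m 1 1 ^ 2, 2 * m 1 0 * m 1 1;
     m 0 0 * m 1 0, m 0 1 * m 1 1, m 0 0 * m 1 1 + m 0 1 * m 1 0]

theorem phiMat_mul {K : Type*} [CommRing K] (m n : Matrix (Fin 2) (Fin 2) K) :
    phiMat (m * n) = phiMat m * phiMat n := by
  ext i j
  fin_cases i <;> fin_cases j <;>
    simp [phiMat, mul_apply, Fin.sum_univ_succ] <;> ring

theorem phiMat_one {K : Type*} [CommRing K] : phiMat (1 : Matrix (Fin 2) (Fin 2) K) = 1 := by
  ext i j
  fin_cases i <;> fin_cases j <;> simp [phiMat, one_apply, vecHead, vecTail]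

theorem phiMat_quad {K : Type*} [CommRing K] (m : Matrix (Fin 2) (Fin 2) K) (x : Fin 3 → K) :
    quadForm K ((phiMat m).mulVec x) = (m.det) ^ 2 * quadForm K x := by
  simp [quadForm, phiMat, mulVec, dotProduct, Fin.sum_univ_succ, det_fin_two]
  ring

def phiHom (K : Type*) [CommRing K] : Matrix (Fin 2) (Fin 2) K →* Matrix (Fin 3) (Fin 3) K where
  toFun := phiMat
  map_one' := phiMat_one
  map_mul' := phiMat_mul

noncomputable def phi (K : Type*) [CommRing K] : GL (Fin 2) K →* GL (Fin 3) K :=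
  Units.map (phiHom K)

theorem phi_coe {K : Type*} [CommRing K] (g : GL (Fin 2) K) :
    ((phi K g : GL (Fin 3) K) : Matrix (Fin 3) (Fin 3) K) = phiMat (g : Matrix (Fin 2) (Fin 2) K) :=
  rfl

theorem phiMat_det {K : Type*} [CommRing K] (m : Matrix (Fin 2) (Fin 2) K) :
    (phiMat m).det = m.det ^ 3 := by
  simp [phiMat, det_fin_three, det_fin_two]
  ring

set_option maxHeartbeats 1000000 in
theorem key {K : Type*} [Field K] (h2 : (2:K) ≠ 0) (M B : Matrix (Fin 3) (Fin 3) K)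
    (hMB : M * B = 1) (γ : K) (hγ : γ ≠ 0)
    (hA : ∀ x, quadForm K (M.mulVec x) = γ * quadForm K x) :
    ∃ (g : Matrix (Fin 2) (Fin 2) K) (lam : K), lam ≠ 0 ∧ M = lam • phiMat g := by
  have E1 := hA ![1,0,0]
  have E2 := hA ![0,1,0]
  have E3 := hA ![0,0,1]
  have E4 := hA ![1,1,0]
  have E5 := hA ![1,0,1]
  have E6 := hA ![0,1,1]
  simp [quadForm, mulVec, dotProduct, Fin.sum_univ_succ] at E1 E2 E3 E4 E5 E6
  set N : Matrix (Fin 3) (Fin 3) K := !![0,1,0;1,0,0;0,0,-2] with hN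
  set Ni : Matrix (Fin 3) (Fin 3) K := !![0,1,0;1,0,0;0,0,-(2:K)⁻¹] with hNi
  have hNNi : N * Ni = 1 := by
    ext i j; fin_cases i <;> fin_cases j <;>
      simp [hN, hNi, mul_apply, Fin.sum_univ_succ, one_apply] <;> field_simp
  have hNiN : Ni * N = 1 := by
    ext i j; fin_cases i <;> fin_cases j <;>
      simp [hN, hNi, mul_apply, Fin.sum_univ_succ, one_apply] <;> field_simp
  have hG : Mᵀ * N * M = γ • N := by
    ext i j; fin_cases i <;> fin_cases j <;>
      simp [hN, mul_apply, Fin.sum_univ_succ, transpose_apply, vecHead, vecTail]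
    · linear_combination 2 * E1
    · linear_combination E4 - E1 - E2
    · linear_combination E5 - E1 - E3
    · linear_combination E4 - E1 - E2
    · linear_combination 2 * E2
    · linear_combination E6 - E2 - E3
    · linear_combination E5 - E1 - E3
    · linear_combination E6 - E2 - E3
    · linear_combination 2 * E3
  have h1 : Mᵀ * N = γ • (N * B) := by
    calc Mᵀ * N = (Mᵀ * N * M) * B := by rw [mul_assoc (Mᵀ * N), hMB, mul_one]
    _ = (γ • N) * B := by rw [hG]
    _ = γ • (N * B) := smul_mul_assoc γ N B
  have hMt : Mᵀ = γ • (N * B * Ni) := by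
    calc Mᵀ = Mᵀ * N * Ni := by rw [mul_assoc, hNNi, mul_one]
    _ = (γ • (N * B)) * Ni := by rw [h1]
    _ = γ • (N * B * Ni) := smul_mul_assoc γ (N * B) Ni
  have hG2 : M * Ni * Mᵀ = γ • Ni := by
    rw [hMt, mul_smul_comm]
    have : M * Ni * (N * B * Ni) = Ni := by
      calc M * Ni * (N * B * Ni) = M * (Ni * N) * B * Ni := by
            simp only [mul_assoc]
      _ = Ni := by rw [hNiN, mul_one, hMB, one_mul]
    rw [this]
  have F1 := congrFun (congrFun hG2 0) 0
  have F5 := congrFun (congrFun hG2 0) 2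
  simp [hNi, mul_apply, Fin.sum_univ_succ, transpose_apply, vecHead, vecTail] at F1 F5
  have F3 := congrFun (congrFun hG2 2) 2
  simp [hNi, mul_apply, Fin.sum_univ_succ, transpose_apply, vecHead, vecTail] at F3
  field_simp at F1 F5 F3
  by_cases ha : M 0 0 = 0
  · -- degenerate case: a = 0
    have hg0 : M 2 0 = 0 := by
      have hsq : M 2 0 ^ 2 = 0 := by linear_combination M 1 0 * ha - E1
      exact pow_eq_zero_iff (n := 2) (by norm_num) |>.mp hsq
    have he0 : M 0 2 = 0 := by
      have hsq : M 0 2 ^ 2 = 0 := by linear_combination 4 * M 0 1 * ha - F1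
      exact pow_eq_zero_iff (n := 2) (by norm_num) |>.mp hsq
    have hb : M 0 1 ≠ 0 := by
      intro hb0
      have h00 := congrFun (congrFun hMB 0) 0
      simp [mul_apply, Fin.sum_univ_succ, one_apply] at h00
      rw [ha, hb0, he0] at h00
      simp at h00
    refine ⟨!![0, 1; M 2 2 / M 0 1, M 2 1 / M 0 1], M 0 1, hb, ?_⟩
    ext i j
    fin_cases i <;> fin_cases j <;>
      simp [phiMat, Matrix.smul_apply, vecHead, vecTail]
    all_goals try field_simp
    · exact ha
    · exact he0
    · linear_combination (E4 - E1 - E2 + E3) - M 1 1*ha + 2*M 2 1*hg0 - M 1 2*he0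
    · linear_combination E2
    · linear_combination (E6 - E2 - E3) - M 1 1*he0
    · exact hg0
  · -- main case: a ≠ 0
    refine ⟨!![1, M 0 2 / (2 * M 0 0);
              M 2 0 / M 0 0, (2 * M 0 0 * M 2 2 - M 0 2 * M 2 0) / (2 * M 0 0 ^ 2)],
            M 0 0, ha, ?_⟩
    ext i j
    fin_cases i <;> fin_cases j <;>
      simp [phiMat, Matrix.smul_apply, vecHead, vecTail]
    all_goals try field_simp
    · linear_combination F1
    · linear_combination E1
    · linear_combination (4*M 0 0^2)*E4 - (4*M 0 0^2 + 4*M 0 0*M 0 1)*E1 - (4*M 0 0^2)*E2 - (4*M 0 0*M 2 0)*F5 + (M 2 0^2)*F1 + (4*M 0 0^2)*F3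
    · linear_combination M 0 0*E5 - (M 0 0 + M 0 2)*E1 - M 0 0*E3
    · linear_combination 2*M 0 0*F5 - M 2 0*F1
    · ring

theorem phi_mem_similitude (K : Type*) [Field K] (g : GL (Fin 2) K) :
    phi K g ∈ similitudeGroup K := by
  refine ⟨((g : Matrix (Fin 2) (Fin 2) K).det) ^ 2, ?_, ?_⟩
  · have hu : IsUnit (g : Matrix (Fin 2) (Fin 2) K).det :=
      (Matrix.isUnit_iff_isUnit_det _).mp g.isUnit
    exact pow_ne_zero 2 hu.ne_zero
  · intro x
    rw [phi_coe]
    exact phiMat_quad _ x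

set_option maxHeartbeats 1000000 in
theorem card_similitudeGroup_mod_scalars
    (K : Type*) [Field K] [Fintype K] (hodd : Odd (Fintype.card K)) :
    Nat.card (similitudeGroup K ⧸ (scalarSubgroup K).subgroupOf (similitudeGroup K)) =
      Fintype.card K * (Fintype.card K ^ 2 - 1) := by
  classical
  have hchar : ringChar K ≠ 2 := by
    intro h
    have h0 := FiniteField.even_card_iff_char_two.mp h
    have h1 := Nat.odd_iff.mp hodd
    omega
  have h2 : (2 : K) ≠ 0 := Ring.two_ne_zero hchar
  set H := (scalarSubgroup K).subgroupOf (similitudeGroup K) with hH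
  haveI hHn : H.Normal := by
    constructor
    intro x hx g
    rw [hH, Subgroup.mem_subgroupOf] at hx ⊢
    obtain ⟨μ, hμ, hxx⟩ := hx
    refine ⟨μ, hμ, ?_⟩
    have hc : ((↑(g * x * g⁻¹) : GL (Fin 3) K) : Matrix (Fin 3) (Fin 3) K)
        = ((g : GL (Fin 3) K) : Matrix (Fin 3) (Fin 3) K)
          * ((x : GL (Fin 3) K) : Matrix (Fin 3) (Fin 3) K)
          * (((g : GL (Fin 3) K)⁻¹ : GL (Fin 3) K) : Matrix (Fin 3) (Fin 3) K) := rfl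
    rw [hc, hxx, mul_smul_comm, smul_mul_assoc, mul_one, ← Units.val_mul, mul_inv_cancel,
      Units.val_one]
  let ψ : GL (Fin 2) K →* similitudeGroup K :=
    (phi K).codRestrict _ (phi_mem_similitude K)
  let π : GL (Fin 2) K →* (similitudeGroup K ⧸ H) := (QuotientGroup.mk' H).comp ψ
  have hψcoe : ∀ u : GL (Fin 2) K, ((ψ u : similitudeGroup K) : GL (Fin 3) K) = phi K u :=
    fun u => rfl
  have hπker : ∀ u : GL (Fin 2) K, π u = 1 ↔ phi K u ∈ scalarSubgroup K := by
    intro u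
    rw [MonoidHom.comp_apply, QuotientGroup.mk'_apply, QuotientGroup.eq_one_iff,
      Subgroup.mem_subgroupOf, hψcoe]
  have hsurj : Function.Surjective π := by
    intro x
    obtain ⟨A, rfl⟩ := QuotientGroup.mk'_surjective H x
    obtain ⟨γ, hγ, hA⟩ := A.2
    obtain ⟨g, lam, hlam, hM⟩ :=
      key h2 ((A : GL (Fin 3) K) : Matrix (Fin 3) (Fin 3) K)
        (((A : GL (Fin 3) K)⁻¹ : GL (Fin 3) K) : Matrix (Fin 3) (Fin 3) K)
        (A : GL (Fin 3) K).mul_inv γ hγ hA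
    have hdetg : IsUnit g := by
      rw [Matrix.isUnit_iff_isUnit_det, isUnit_iff_ne_zero]
      have hMdet : ((A : GL (Fin 3) K) : Matrix (Fin 3) (Fin 3) K).det ≠ 0 :=
        ((Matrix.isUnit_iff_isUnit_det _).mp (A : GL (Fin 3) K).isUnit).ne_zero
      rw [hM] at hMdet
      simp only [det_smul, phiMat_det, Fintype.card_fin] at hMdet
      intro hd
      exact hMdet (by rw [hd]; ring)
    refine ⟨hdetg.unit, ?_⟩
    have hπ : π hdetg.unit = QuotientGroup.mk (ψ hdetg.unit) := rfl
    rw [hπ, QuotientGroup.mk'_apply, QuotientGroup.eq]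
    rw [Subgroup.mem_subgroupOf]
    refine ⟨lam, hlam, ?_⟩
    have hcoe : (((ψ hdetg.unit)⁻¹ * A : similitudeGroup K) : GL (Fin 3) K)
        = (phi K hdetg.unit)⁻¹ * (A : GL (Fin 3) K) := by
      push_cast [hψcoe]
      rfl
    rw [hcoe]
    have hPcoe : ((phi K hdetg.unit : GL (Fin 3) K) : Matrix (Fin 3) (Fin 3) K) = phiMat g := by
      rw [phi_coe, IsUnit.unit_spec]
    have : (((phi K hdetg.unit)⁻¹ * (A : GL (Fin 3) K) : GL (Fin 3) K) : Matrix (Fin 3) (Fin 3) K)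
        = ((phi K hdetg.unit)⁻¹ : GL (Fin 3) K) * ((A : GL (Fin 3) K) : Matrix (Fin 3) (Fin 3) K) :=
      rfl
    rw [this, hM, mul_smul_comm, ← hPcoe, ← Units.val_mul, inv_mul_cancel, Units.val_one]
  -- the kernel is the scalar subgroup of GL(2), of cardinality q - 1
  have hkercard : Nat.card π.ker = Fintype.card K - 1 := by
    have hmem : ∀ t : Kˣ, ((t : K) • (1 : Matrix (Fin 2) (Fin 2) K)) *
        (((t⁻¹ : Kˣ) : K) • (1 : Matrix (Fin 2) (Fin 2) K)) = 1 := by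
      intro t
      rw [smul_mul_smul_comm, one_mul]
      norm_cast
      rw [mul_inv_cancel]
      simp
    have hmem' : ∀ t : Kˣ, (((t⁻¹ : Kˣ) : K) • (1 : Matrix (Fin 2) (Fin 2) K)) *
        ((t : K) • (1 : Matrix (Fin 2) (Fin 2) K)) = 1 := by
      intro t
      rw [smul_mul_smul_comm, one_mul]
      norm_cast
      rw [inv_mul_cancel]
      simp
    let U : Kˣ → GL (Fin 2) K := fun t =>
      ⟨(t : K) • 1, ((t⁻¹ : Kˣ) : K) • 1, hmem t, hmem' t⟩
    have hUker : ∀ t : Kˣ, U t ∈ π.ker := by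
      intro t
      rw [MonoidHom.mem_ker, hπker]
      refine ⟨(t : K) ^ 2, pow_ne_zero 2 t.ne_zero, ?_⟩
      have : ((phi K (U t) : GL (Fin 3) K) : Matrix (Fin 3) (Fin 3) K)
          = phiMat ((t : K) • 1) := rfl
      rw [this]
      ext i j
      fin_cases i <;> fin_cases j <;>
        simp [phiMat, Matrix.smul_apply, one_apply, vecHead, vecTail] <;> ring
    let f : Kˣ → π.ker := fun t => ⟨U t, hUker t⟩
    have hbij : Function.Bijective f := by
      constructor
      · intro t t' htt
        have h00 : ((U t : Matrix (Fin 2) (Fin 2) K)) 0 0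
            = ((U t' : Matrix (Fin 2) (Fin 2) K)) 0 0 := by
          rw [Subtype.ext_iff] at htt
          rw [show (U t : Matrix (Fin 2) (Fin 2) K) = (U t' : Matrix (Fin 2) (Fin 2) K) from
            congrArg Units.val htt]
        simp [U, Matrix.smul_apply, one_apply] at h00
        exact Units.ext h00
      · rintro ⟨u, hu⟩
        rw [MonoidHom.mem_ker, hπker] at hu
        obtain ⟨μ, hμ, hmu⟩ := hu
        rw [phi_coe] at hmu
        set m : Matrix (Fin 2) (Fin 2) K := (u : Matrix (Fin 2) (Fin 2) K) with hm
        have e01 : m 0 1 ^ 2 = 0 := by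
          have := congrFun (congrFun hmu 0) 1
          simpa [phiMat, Matrix.smul_apply, one_apply] using this
        have e10 : m 1 0 ^ 2 = 0 := by
          have := congrFun (congrFun hmu 1) 0
          simpa [phiMat, Matrix.smul_apply, one_apply] using this
        have e00 : m 0 0 ^ 2 = μ := by
          have := congrFun (congrFun hmu 0) 0
          simpa [phiMat, Matrix.smul_apply, one_apply] using this
        have e11 : m 1 1 ^ 2 = μ := by
          have := congrFun (congrFun hmu 1) 1
          simpa [phiMat, Matrix.smul_apply, one_apply] using this
        have e22 : m 0 0 * m 1 1 + m 0 1 * m 1 0 = μ := by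
          have := congrFun (congrFun hmu 2) 2
          simpa [phiMat, Matrix.smul_apply, one_apply] using this
        have hm01 : m 0 1 = 0 := pow_eq_zero_iff (n := 2) (by norm_num) |>.mp e01
        have hm10 : m 1 0 = 0 := pow_eq_zero_iff (n := 2) (by norm_num) |>.mp e10
        have hp : m 0 0 ≠ 0 := by
          intro h0
          rw [h0] at e00
          exact hμ (by rw [← e00]; ring)
        have hs : m 1 1 = m 0 0 := by
          have hps : m 0 0 * m 1 1 = m 0 0 * m 0 0 := by
            linear_combination e22 - e00 - m 1 0 * hm01
          exact mul_left_cancel₀ hp hps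
        refine ⟨⟨m 0 0, (m 0 0)⁻¹, mul_inv_cancel₀ hp, inv_mul_cancel₀ hp⟩, ?_⟩
        apply Subtype.ext
        apply Units.ext
        show (m 0 0 • (1 : Matrix (Fin 2) (Fin 2) K)) = m
        ext i j
        fin_cases i <;> fin_cases j <;>
          simp [Matrix.smul_apply, one_apply, hm01, hm10, hs]
    have := Nat.card_eq_of_bijective f hbij
    rw [← this, Nat.card_eq_fintype_card, Fintype.card_units]
  -- first isomorphism theorem and counting
  have e := QuotientGroup.quotientKerEquivOfSurjective π hsurj
  have hQt : Nat.card (similitudeGroup K ⧸ H) = π.ker.index := by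
    rw [Subgroup.index_eq_card, Nat.card_congr e.toEquiv]
  have hGL2 : Nat.card (GL (Fin 2) K) =
      (Fintype.card K ^ 2 - 1) * (Fintype.card K ^ 2 - Fintype.card K) := by
    rw [Matrix.card_GL_field]
    simp [Fin.prod_univ_two]
  have hindex : π.ker.index * (Fintype.card K - 1) =
      (Fintype.card K ^ 2 - 1) * (Fintype.card K ^ 2 - Fintype.card K) := by
    rw [← hkercard, ← hGL2]
    exact Subgroup.index_mul_card π.ker
  rw [hQt]
  set n := Fintype.card K with hn
  have hn2 : 2 ≤ n := Fintype.one_lt_card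
  apply Nat.eq_of_mul_eq_mul_right (show 0 < n - 1 by omega)
  rw [hindex]
  have h1n : 1 ≤ n := by omega
  have h1nn : 1 ≤ n ^ 2 := by nlinarith
  have hnnn : n ≤ n ^ 2 := by nlinarith
  zify [h1n, h1nn, hnnn]
  ring
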